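/- arXiv:1805.12406 — 2 statements merged into one kernel-verified Lean document; each statement's English description precedes it below -/
import Mathlib

section
/- Let ω_r > 0 and γ ∈ (−1, 1]. For every ω > 0, the describing-function magnitude of GFORE satisfies |G(ω)| ≥ ω_r/√(ω_r² + ω²), i.e., it is at least the magnitude of the base linear first-order low-pass filter at the same frequency, with equality for all ω if and only if γ = 1; the inequality is strict for every ω > 0 when γ < 1. -/
/-- Describing-function correction term of GFORE with corner frequency `ωr`
and reset parameter `γ`, at frequency `ω`. -/
noncomputable def Theta (ωr γ ω : ℝ) : ℝ :=
  (2 / Real.pi) * (1 + Real.exp (-Real.pi * ωr / ω)) *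
    ((1 - γ) / (1 + γ * Real.exp (-Real.pi * ωr / ω))) * (ω ^ 2 / (ωr ^ 2 + ω ^ 2))

/-- Describing function of GFORE at frequency `ω`. -/
noncomputable def GforeDF (ωr γ ω : ℝ) : ℂ :=
  (ωr : ℂ) * (1 + Complex.I * (Theta ωr γ ω : ℝ)) / ((ωr : ℂ) + Complex.I * (ω : ℝ))

lemma theta_pos (ωr γ ω : ℝ) (hωr : 0 < ωr) (hγ1 : -1 < γ) (hγ2 : γ < 1) (hω : 0 < ω) :
    0 < Theta ωr γ ω := by
  set E := Real.exp (-Real.pi * ωr / ω) with hE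
  have hE0 : 0 < E := Real.exp_pos _
  have hE1 : E < 1 := by
    rw [hE]
    have : -Real.pi * ωr / ω < 0 := by
      apply div_neg_of_neg_of_pos _ hω
      nlinarith [Real.pi_pos]
    calc Real.exp (-Real.pi * ωr / ω) < Real.exp 0 := Real.exp_lt_exp.mpr this
      _ = 1 := Real.exp_zero
  have hden : 0 < 1 + γ * E := by nlinarith
  unfold Theta
  rw [← hE]
  have h1 : 0 < (2 / Real.pi) := by positivity
  have h2 : 0 < 1 + E := by linarith
  have h3 : 0 < (1 - γ) / (1 + γ * E) := div_pos (by linarith) hden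
  have h4 : 0 < ω ^ 2 / (ωr ^ 2 + ω ^ 2) := by positivity
  positivity

lemma abs_gfore (ωr γ ω : ℝ) (hωr : 0 < ωr) :
    ‖GforeDF ωr γ ω‖
      = ωr * Real.sqrt (1 + (Theta ωr γ ω) ^ 2) / Real.sqrt (ωr ^ 2 + ω ^ 2) := by
  unfold GforeDF
  rw [norm_div, norm_mul]
  have h1 : ‖((ωr : ℝ) : ℂ)‖ = ωr := by
    rw [Complex.norm_real, Real.norm_eq_abs, abs_of_pos hωr]
  have h2 : ‖(1 + Complex.I * ((Theta ωr γ ω : ℝ) : ℂ))‖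
      = Real.sqrt (1 + (Theta ωr γ ω) ^ 2) := by
    have : (1 : ℂ) + Complex.I * ((Theta ωr γ ω : ℝ) : ℂ)
        = ((1 : ℝ) : ℂ) + ((Theta ωr γ ω : ℝ) : ℂ) * Complex.I := by
      push_cast; ring
    rw [this, Complex.norm_add_mul_I]
    norm_num
  have h3 : ‖(((ωr : ℝ) : ℂ) + Complex.I * ((ω : ℝ) : ℂ))‖
      = Real.sqrt (ωr ^ 2 + ω ^ 2) := by
    have : ((ωr : ℝ) : ℂ) + Complex.I * ((ω : ℝ) : ℂ)
        = ((ωr : ℝ) : ℂ) + ((ω : ℝ) : ℂ) * Complex.I := by ring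
    rw [this, Complex.norm_add_mul_I]
  rw [h1, h2, h3]

/-- For `ωr > 0` and `γ ∈ (−1, 1]`, the GFORE describing-function magnitude is at least
the magnitude `ωr/√(ωr² + ω²)` of the base linear low-pass filter at every `ω > 0`,
with equality for all `ω > 0` iff `γ = 1`, and the inequality is strict for every
`ω > 0` when `γ < 1`. -/
theorem gfore_gain_ge (ωr γ : ℝ) (hωr : 0 < ωr) (hγ : γ ∈ Set.Ioc (-1 : ℝ) 1) :
    (∀ ω : ℝ, 0 < ω →
      ωr / Real.sqrt (ωr ^ 2 + ω ^ 2) ≤ ‖GforeDF ωr γ ω‖) ∧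
    ((∀ ω : ℝ, 0 < ω →
      ‖GforeDF ωr γ ω‖ = ωr / Real.sqrt (ωr ^ 2 + ω ^ 2)) ↔ γ = 1) ∧
    (γ < 1 → ∀ ω : ℝ, 0 < ω →
      ωr / Real.sqrt (ωr ^ 2 + ω ^ 2) < ‖GforeDF ωr γ ω‖) := by
  obtain ⟨hγ1, hγ2⟩ := hγ
  have hsq : ∀ ω : ℝ, 0 < ω → 0 < Real.sqrt (ωr ^ 2 + ω ^ 2) := by
    intro ω hω
    apply Real.sqrt_pos.mpr; positivity
  have hstrict : γ < 1 → ∀ ω : ℝ, 0 < ω →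
      ωr / Real.sqrt (ωr ^ 2 + ω ^ 2) < ‖GforeDF ωr γ ω‖ := by
    intro h ω hω
    rw [abs_gfore ωr γ ω hωr]
    have hθ := theta_pos ωr γ ω hωr hγ1 h hω
    have h1 : 1 < Real.sqrt (1 + (Theta ωr γ ω) ^ 2) := by
      nlinarith [Real.sq_sqrt (show (0:ℝ) ≤ 1 + (Theta ωr γ ω) ^ 2 by positivity),
        Real.sqrt_nonneg (1 + (Theta ωr γ ω) ^ 2)]
    rw [div_lt_div_iff₀ (hsq ω hω) (hsq ω hω)]
    have hS := hsq ω hω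
    nlinarith [mul_pos (mul_pos hωr hS) (sub_pos.mpr h1)]
  have hge : ∀ ω : ℝ, 0 < ω →
      ωr / Real.sqrt (ωr ^ 2 + ω ^ 2) ≤ ‖GforeDF ωr γ ω‖ := by
    intro ω hω
    rcases lt_or_eq_of_le hγ2 with h | h
    · exact le_of_lt (hstrict h ω hω)
    · rw [abs_gfore ωr γ ω hωr]
      have hθ : Theta ωr γ ω = 0 := by
        unfold Theta; rw [← h]; simp
      rw [hθ]
      norm_num
  refine ⟨hge, ⟨?_, ?_⟩, hstrict⟩
  · intro h
    by_contra hne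
    have hlt : γ < 1 := lt_of_le_of_ne hγ2 hne
    have := hstrict hlt 1 one_pos
    have := h 1 one_pos
    linarith
  · intro h ω hω
    rw [abs_gfore ωr γ ω hωr]
    have hθ : Theta ωr γ ω = 0 := by
      unfold Theta; rw [h]; simp
    rw [hθ]
    norm_num
end

section
/- Let ω_r > 0, ω_f > ω_r and γ ∈ [0, 1]. For every ω with 0 < ω ≤ ω_f, the magnitude of the CgLp describing function satisfies 1/√2 ≤ |D(ω)| ≤ √(1 + 16/π²); i.e., over the whole band (0, ω_f] the CgLp gain stays within fixed constant bounds independent of ω, ω_r and ω_f (the 'constant in gain' property). -/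
/-- Describing function of the CgLp element (GFORE in series with the linear lead
filter `(1 + iω/ωr)/(1 + iω/ωf)`) at frequency `ω`. -/
noncomputable def CgLpDF (ωr ωf γ ω : ℝ) : ℂ :=
  (1 + Complex.I * (Theta ωr γ ω : ℝ)) / (1 + Complex.I * ((ω / ωf : ℝ) : ℂ))

lemma abs_one_add_I_mul (t : ℝ) :
    ‖1 + Complex.I * (t : ℂ)‖ = Real.sqrt (1 + t ^ 2) := by
  rw [Complex.norm_def]
  congr 1
  simp [Complex.normSq_apply]
  ring

lemma theta_nonneg (ωr γ ω : ℝ) (hωr : 0 < ωr) (hγ : γ ∈ Set.Icc (0 : ℝ) 1) (hω : 0 < ω) :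
    0 ≤ Theta ωr γ ω := by
  obtain ⟨hγ0, hγ1⟩ := hγ
  have he : 0 < Real.exp (-Real.pi * ωr / ω) := Real.exp_pos _
  have hπ := Real.pi_pos
  apply mul_nonneg
  apply mul_nonneg
  apply mul_nonneg
  · positivity
  · positivity
  · apply div_nonneg (by linarith)
    positivity
  · positivity

lemma theta_le (ωr γ ω : ℝ) (hωr : 0 < ωr) (hγ : γ ∈ Set.Icc (0 : ℝ) 1) (hω : 0 < ω) :
    Theta ωr γ ω ≤ 4 / Real.pi := by
  obtain ⟨hγ0, hγ1⟩ := hγ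
  have he : 0 < Real.exp (-Real.pi * ωr / ω) := Real.exp_pos _
  have he1 : Real.exp (-Real.pi * ωr / ω) ≤ 1 := by
    apply Real.exp_le_one_iff.mpr
    have hπ := Real.pi_pos
    exact div_nonpos_of_nonpos_of_nonneg (by nlinarith) hω.le
  have hπ := Real.pi_pos
  have hfrac : (1 - γ) / (1 + γ * Real.exp (-Real.pi * ωr / ω)) ≤ 1 := by
    rw [div_le_one (by nlinarith)]
    nlinarith
  have hfrac0 : 0 ≤ (1 - γ) / (1 + γ * Real.exp (-Real.pi * ωr / ω)) :=
    div_nonneg (by linarith) (by nlinarith)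
  have hw : ω ^ 2 / (ωr ^ 2 + ω ^ 2) ≤ 1 := by
    rw [div_le_one (by positivity)]; nlinarith
  have hw0 : 0 ≤ ω ^ 2 / (ωr ^ 2 + ω ^ 2) := by positivity
  have h1 : Theta ωr γ ω ≤ (2 / Real.pi) * (1 + Real.exp (-Real.pi * ωr / ω)) := by
    unfold Theta
    calc (2 / Real.pi) * (1 + Real.exp (-Real.pi * ωr / ω)) *
        ((1 - γ) / (1 + γ * Real.exp (-Real.pi * ωr / ω))) * (ω ^ 2 / (ωr ^ 2 + ω ^ 2))
        ≤ (2 / Real.pi) * (1 + Real.exp (-Real.pi * ωr / ω)) *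
        ((1 - γ) / (1 + γ * Real.exp (-Real.pi * ωr / ω))) * 1 := by
          apply mul_le_mul_of_nonneg_left hw
          apply mul_nonneg (by positivity) hfrac0
      _ ≤ (2 / Real.pi) * (1 + Real.exp (-Real.pi * ωr / ω)) * 1 * 1 := by
          apply mul_le_mul_of_nonneg_right _ zero_le_one
          exact mul_le_mul_of_nonneg_left hfrac (by positivity)
      _ = (2 / Real.pi) * (1 + Real.exp (-Real.pi * ωr / ω)) := by ring
  have h2 : (2 / Real.pi) * (1 + Real.exp (-Real.pi * ωr / ω)) ≤ 4 / Real.pi := by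
    have : (1 : ℝ) + Real.exp (-Real.pi * ωr / ω) ≤ 2 := by linarith
    calc (2 / Real.pi) * (1 + Real.exp (-Real.pi * ωr / ω)) ≤ (2 / Real.pi) * 2 :=
          mul_le_mul_of_nonneg_left this (by positivity)
      _ = 4 / Real.pi := by ring
  linarith

/-- For `ωr > 0`, `ωf > ωr` and `γ ∈ [0, 1]`, over the whole band `0 < ω ≤ ωf` the CgLp
describing-function magnitude stays within fixed constant bounds:
`1/√2 ≤ |D(ω)| ≤ √(1 + 16/π²)` (the "constant in gain" property). -/
theorem cglp_constant_gain (ωr ωf γ : ℝ) (hωr : 0 < ωr) (hωf : ωr < ωf)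
    (hγ : γ ∈ Set.Icc (0 : ℝ) 1) (ω : ℝ) (hω : 0 < ω) (hωle : ω ≤ ωf) :
    1 / Real.sqrt 2 ≤ ‖CgLpDF ωr ωf γ ω‖ ∧
    ‖CgLpDF ωr ωf γ ω‖ ≤ Real.sqrt (1 + 16 / Real.pi ^ 2) := by
  have hπ := Real.pi_pos
  set t := Theta ωr γ ω with ht
  set s := ω / ωf with hs
  have habs : ‖CgLpDF ωr ωf γ ω‖ =
      Real.sqrt (1 + t ^ 2) / Real.sqrt (1 + s ^ 2) := by
    rw [CgLpDF, norm_div, abs_one_add_I_mul, abs_one_add_I_mul]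
  have ht0 : 0 ≤ t := theta_nonneg ωr γ ω hωr hγ hω
  have ht4 : t ≤ 4 / Real.pi := theta_le ωr γ ω hωr hγ hω
  have hs0 : 0 ≤ s := le_of_lt (div_pos hω (lt_trans hωr hωf))
  have hs1 : s ≤ 1 := (div_le_one (lt_trans hωr hωf)).mpr hωle
  rw [habs]
  constructor
  · have hnum : (1 : ℝ) ≤ Real.sqrt (1 + t ^ 2) := by
      have := Real.sqrt_le_sqrt (show (1:ℝ) ≤ 1 + t ^ 2 by nlinarith)
      rwa [Real.sqrt_one] at this
    have hden : Real.sqrt (1 + s ^ 2) ≤ Real.sqrt 2 :=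
      Real.sqrt_le_sqrt (by nlinarith)
    have h2 : (0:ℝ) < Real.sqrt 2 := by positivity
    have h1s : (0:ℝ) < Real.sqrt (1 + s ^ 2) := Real.sqrt_pos.mpr (by nlinarith)
    calc 1 / Real.sqrt 2 ≤ 1 / Real.sqrt (1 + s ^ 2) :=
          one_div_le_one_div_of_le h1s hden
      _ ≤ Real.sqrt (1 + t ^ 2) / Real.sqrt (1 + s ^ 2) :=
          div_le_div_of_nonneg_right hnum h1s.le
  · have hnum : Real.sqrt (1 + t ^ 2) ≤ Real.sqrt (1 + 16 / Real.pi ^ 2) := by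
      apply Real.sqrt_le_sqrt
      have : t ^ 2 ≤ (4 / Real.pi) ^ 2 := by
        apply pow_le_pow_left₀ ht0 ht4
      have heq : (4 / Real.pi) ^ 2 = 16 / Real.pi ^ 2 := by
        rw [div_pow]; norm_num
      linarith [heq ▸ this]
    have hden : (1:ℝ) ≤ Real.sqrt (1 + s ^ 2) := by
      have := Real.sqrt_le_sqrt (show (1:ℝ) ≤ 1 + s ^ 2 by nlinarith)
      rwa [Real.sqrt_one] at this
    calc Real.sqrt (1 + t ^ 2) / Real.sqrt (1 + s ^ 2)
        ≤ Real.sqrt (1 + t ^ 2) / 1 := by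
          apply div_le_div_of_nonneg_left (Real.sqrt_nonneg _) one_pos hden
      _ = Real.sqrt (1 + t ^ 2) := by ring
      _ ≤ Real.sqrt (1 + 16 / Real.pi ^ 2) := hnum
end
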